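/- Let X and Y be locally compact Hausdorff topological spaces. Then the algebras C₀(X, ℂ) and C₀(Y, ℂ) are isomorphic as ℂ-algebras if and only if X and Y are homeomorphic. -/
import Mathlib

open ZeroAtInfty Filter Topology

section Aux

variable {Z : Type*} [TopologicalSpace Z] [LocallyCompactSpace Z] [T2Space Z]

/-- Restriction of a continuous map on the one-point compactification, shifted to vanish
at infinity. -/
noncomputable def c0Restr (g : C(OnePoint Z, ℂ)) : C₀(Z, ℂ) where
  toFun := fun z => g z - g OnePoint.infty
  continuous_toFun := (g.continuous.comp OnePoint.continuous_coe).sub continuous_const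
  zero_at_infty' := by
    have h1 : Tendsto ((↑) : Z → OnePoint Z) (cocompact Z) (𝓝 (OnePoint.infty)) := by
      rw [← Filter.coclosedCompact_eq_cocompact]
      exact OnePoint.tendsto_coe_infty
    have h2 : Tendsto (fun z : Z => g z) (cocompact Z) (𝓝 (g OnePoint.infty)) :=
      (g.continuous.tendsto _).comp h1
    have := h2.sub (tendsto_const_nhds (x := g OnePoint.infty))
    simpa using this

@[simp] lemma c0Restr_apply (g : C(OnePoint Z, ℂ)) (z : Z) :
    c0Restr g z = g z - g OnePoint.infty := rfl

end Aux

section Aux2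

set_option linter.unusedSectionVars false

variable {Z : Type*} [TopologicalSpace Z] [LocallyCompactSpace Z] [T2Space Z]

/-- Extension of a function vanishing at infinity to the one-point compactification. -/
noncomputable def c0Ext (f : C₀(Z, ℂ)) : C(OnePoint Z, ℂ) where
  toFun := fun p => p.elim 0 f
  continuous_toFun := by
    rw [OnePoint.continuous_iff]
    constructor
    · rw [Filter.coclosedCompact_eq_cocompact]
      exact f.zero_at_infty'
    · exact f.continuous

@[simp] lemma c0Ext_coe (f : C₀(Z, ℂ)) (z : Z) : c0Ext f (z : OnePoint Z) = f z := rfl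

@[simp] lemma c0Ext_infty (f : C₀(Z, ℂ)) : c0Ext f (OnePoint.infty) = 0 := rfl

lemma c0Restr_ext (f : C₀(Z, ℂ)) : c0Restr (c0Ext f) = f := by
  ext z; simp

/-- Urysohn-type lemma for `C₀` functions. -/
lemma exists_c0_fun {s : Set Z} (hs : IsOpen s) {z : Z} (hz : z ∈ s) :
    ∃ f : C₀(Z, ℂ), f z = 1 ∧ ∀ w ∉ s, f w = 0 := by
  have hA : IsClosed (((↑) '' s : Set (OnePoint Z))ᶜ) :=
    (OnePoint.isOpenEmbedding_coe.isOpenMap s hs).isClosed_compl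
  have hdisj : Disjoint (((↑) '' s : Set (OnePoint Z))ᶜ) {(z : OnePoint Z)} := by
    simp only [Set.disjoint_singleton_right, Set.mem_compl_iff, not_not]
    exact ⟨z, hz, rfl⟩
  obtain ⟨g, hg0, hg1, -⟩ := exists_continuous_zero_one_of_isClosed hA isClosed_singleton hdisj
  set G : C(OnePoint Z, ℂ) := (⟨Complex.ofReal, Complex.continuous_ofReal⟩ : C(ℝ, ℂ)).comp g
  have hGinf : G OnePoint.infty = 0 := by
    have : g OnePoint.infty = 0 := hg0 (by simp [OnePoint.infty_ne_coe])
    simp [G, this]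
  refine ⟨c0Restr G, ?_, ?_⟩
  · have : g (z : OnePoint Z) = 1 := hg1 rfl
    simp [hGinf, G, this]
  · intro w hw
    have hwA : ((w : OnePoint Z)) ∈ ((↑) '' s : Set (OnePoint Z))ᶜ := by
      simp only [Set.mem_compl_iff]
      rintro ⟨v, hv, hvw⟩
      rw [OnePoint.coe_eq_coe] at hvw
      exact hw (hvw ▸ hv)
    have : g (w : OnePoint Z) = 0 := hg0 hwA
    simp [hGinf, G, this]

/-- `C₀` functions separate points. -/
lemma c0_sep {a b : Z} (h : ∀ f : C₀(Z, ℂ), f a = f b) : a = b := by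
  by_contra hab
  obtain ⟨f, hf1, hf0⟩ := exists_c0_fun (isOpen_compl_singleton (x := b)) hab
  have := h f
  rw [hf1, hf0 b (by simp)] at this
  exact one_ne_zero this

end Aux2

section Char

variable {Z : Type*} [TopologicalSpace Z] [LocallyCompactSpace Z] [T2Space Z]

lemma char_is_eval (χ : C₀(Z, ℂ) → ℂ)
    (h1 : ∀ f g, χ (f + g) = χ f + χ g)
    (h2 : ∀ f g, χ (f * g) = χ f * χ g)
    (h3 : ∀ (c : ℂ) f, χ (c • f) = c * χ f)
    (h4 : ∃ f, χ f ≠ 0) : ∃ z : Z, ∀ f, χ f = f z := by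
  have hχ0 : χ 0 = 0 := by
    have := h1 0 0
    rw [add_zero] at this
    linear_combination -this
  -- restriction identities
  have hradd : ∀ g h : C(OnePoint Z, ℂ), c0Restr (g + h) = c0Restr g + c0Restr h := by
    intro g h; ext z; simp; ring
  have hrsmul : ∀ (c : ℂ) (g : C(OnePoint Z, ℂ)), c0Restr (c • g) = c • c0Restr g := by
    intro c g; ext z; simp; ring
  have hrmul : ∀ g h : C(OnePoint Z, ℂ), c0Restr (g * h) =
      c0Restr g * c0Restr h + g OnePoint.infty • c0Restr h + h OnePoint.infty • c0Restr g := by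
    intro g h; ext z
    simp [ZeroAtInftyContinuousMap.smul_apply]
    ring
  -- the extended algebra hom
  set ψ : C(OnePoint Z, ℂ) →+* ℂ :=
    { toFun := fun g => g OnePoint.infty + χ (c0Restr g)
      map_one' := by
        have : c0Restr (1 : C(OnePoint Z, ℂ)) = 0 := by ext z; simp
        simp [this, hχ0]
      map_mul' := by
        intro g h
        show (g * h) OnePoint.infty + χ (c0Restr (g * h)) =
          (g OnePoint.infty + χ (c0Restr g)) * (h OnePoint.infty + χ (c0Restr h))
        rw [hrmul g h, h1, h1, h2, h3, h3]
        simp only [ContinuousMap.mul_apply]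
        ring
      map_zero' := by
        have : c0Restr (0 : C(OnePoint Z, ℂ)) = 0 := by ext z; simp
        simp [this, hχ0]
      map_add' := by
        intro g h
        show (g + h) OnePoint.infty + χ (c0Restr (g + h)) =
          (g OnePoint.infty + χ (c0Restr g)) + (h OnePoint.infty + χ (c0Restr h))
        rw [hradd, h1]
        simp only [ContinuousMap.add_apply]
        ring }
  have hψ : ∀ (c : ℂ) (g : C(OnePoint Z, ℂ)), ψ (c • g) = c • ψ g := by
    intro c g
    show (c • g) OnePoint.infty + χ (c0Restr (c • g)) = c • (g OnePoint.infty + χ (c0Restr g))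
    rw [hrsmul, h3]
    simp [smul_eq_mul]
    ring
  set φ : C(OnePoint Z, ℂ) →ₐ[ℂ] ℂ := AlgHom.mk' ψ hψ
  obtain ⟨p, hp⟩ := (WeakDual.CharacterSpace.continuousMapEval_bijective (OnePoint Z) ℂ).2
    (WeakDual.CharacterSpace.equivAlgHom.symm φ)
  have hφ : ∀ g : C(OnePoint Z, ℂ), φ g = g p := by
    intro g
    have h5 : (WeakDual.CharacterSpace.equivAlgHom.symm φ : C(OnePoint Z, ℂ) → ℂ) g = φ g := by
      rw [WeakDual.CharacterSpace.equivAlgHom_symm_coe]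
    have h6 := DFunLike.congr_fun hp g
    rw [WeakDual.CharacterSpace.continuousMapEval_apply_apply] at h6
    rw [← h5, ← h6]
  induction p using OnePoint.rec with
  | infty =>
    exfalso
    obtain ⟨f, hf⟩ := h4
    apply hf
    have := hφ (c0Ext f)
    simpa [φ, ψ, c0Restr_ext] using this
  | coe z =>
    refine ⟨z, fun f => ?_⟩
    have := hφ (c0Ext f)
    simpa [φ, ψ, c0Restr_ext] using this

end Char

section Comp

variable {X Y : Type*} [TopologicalSpace X] [TopologicalSpace Y]

/-- Composition with a homeomorphism as a map of `C₀` spaces. -/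
noncomputable def c0Comp (h : Y ≃ₜ X) (f : C₀(X, ℂ)) : C₀(Y, ℂ) where
  toFun := f ∘ h
  continuous_toFun := f.continuous.comp h.continuous
  zero_at_infty' := f.zero_at_infty'.comp h.toCocompactMap.cocompact_tendsto'

@[simp] lemma c0Comp_apply (h : Y ≃ₜ X) (f : C₀(X, ℂ)) (y : Y) : c0Comp h f y = f (h y) := rfl

end Comp

/-- For locally compact Hausdorff spaces `X` and `Y`, the (non-unital) `ℂ`-algebras
`C₀(X, ℂ)` and `C₀(Y, ℂ)` are isomorphic as `ℂ`-algebras (i.e. there is a bijective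
`ℂ`-linear ring isomorphism) if and only if `X` and `Y` are homeomorphic. -/
theorem c0_alg_iso_iff_homeomorph
    (X Y : Type*) [TopologicalSpace X] [LocallyCompactSpace X] [T2Space X]
    [TopologicalSpace Y] [LocallyCompactSpace Y] [T2Space Y] :
    (∃ Φ : C₀(X, ℂ) ≃+* C₀(Y, ℂ), ∀ (c : ℂ) (f : C₀(X, ℂ)), Φ (c • f) = c • Φ f) ↔
      Nonempty (X ≃ₜ Y) := by
  constructor
  · rintro ⟨Φ, hΦ⟩
    -- every point of Y gives a character on C₀(X, ℂ)
    have hereX : ∀ y : Y, ∃ x : X, ∀ f : C₀(X, ℂ), Φ f y = f x := by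
      intro y
      apply char_is_eval (fun f => Φ f y)
      · intro f g; simp
      · intro f g; simp
      · intro c f; rw [hΦ]; simp [smul_eq_mul]
      · obtain ⟨f₀, hf₀, -⟩ := exists_c0_fun (isOpen_univ : IsOpen (Set.univ : Set Y)) (Set.mem_univ y)
        exact ⟨Φ.symm f₀, by simp [hf₀]⟩
    have hereY : ∀ x : X, ∃ y : Y, ∀ g : C₀(Y, ℂ), Φ.symm g x = g y := by
      intro x
      apply char_is_eval (fun g => Φ.symm g x)
      · intro f g; simp
      · intro f g; simp
      · intro c g
        have : Φ.symm (c • g) = c • Φ.symm g := by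
          apply Φ.injective
          rw [hΦ, Φ.apply_symm_apply, Φ.apply_symm_apply]
        rw [this]; simp [smul_eq_mul]
      · obtain ⟨f₀, hf₀, -⟩ := exists_c0_fun (isOpen_univ : IsOpen (Set.univ : Set X)) (Set.mem_univ x)
        exact ⟨Φ f₀, by simp [hf₀]⟩
    choose t ht using hereX
    choose s hs using hereY
    have hts : ∀ x : X, t (s x) = x := by
      intro x
      apply c0_sep (Z := X)
      intro f
      rw [← ht (s x) f, ← hs x (Φ f), Φ.symm_apply_apply]
    have hst : ∀ y : Y, s (t y) = y := by
      intro y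
      apply c0_sep (Z := Y)
      intro g
      rw [← hs (t y) g, ← ht y (Φ.symm g), Φ.apply_symm_apply]
    -- continuity of t
    have hTcont : Continuous t := by
      rw [continuous_iff_continuousAt]
      intro y₀
      intro U hU
      obtain ⟨Uo, hUoU, hUo, hyUo⟩ := mem_nhds_iff.mp hU
      obtain ⟨f, hf1, hf0⟩ := exists_c0_fun hUo hyUo
      have hopen : IsOpen (⇑(Φ f) ⁻¹' {(0 : ℂ)}ᶜ) :=
        (map_continuous (Φ f)).isOpen_preimage _ isOpen_compl_singleton
      have hy₀ : y₀ ∈ ⇑(Φ f) ⁻¹' {(0 : ℂ)}ᶜ := by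
        simp only [Set.mem_preimage, Set.mem_compl_iff, Set.mem_singleton_iff]
        rw [ht y₀ f, hf1]; exact one_ne_zero
      refine Filter.mem_map.mpr (Filter.mem_of_superset (hopen.mem_nhds hy₀) ?_)
      intro y hy
      simp only [Set.mem_preimage, Set.mem_compl_iff, Set.mem_singleton_iff] at hy
      rw [ht y f] at hy
      by_contra htyU
      exact hy (hf0 _ (fun hmem => htyU (hUoU hmem)))
    have hScont : Continuous s := by
      rw [continuous_iff_continuousAt]
      intro x₀
      intro U hU
      obtain ⟨Uo, hUoU, hUo, hyUo⟩ := mem_nhds_iff.mp hU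
      obtain ⟨g, hg1, hg0⟩ := exists_c0_fun hUo hyUo
      have hopen : IsOpen (⇑(Φ.symm g) ⁻¹' {(0 : ℂ)}ᶜ) :=
        (map_continuous (Φ.symm g)).isOpen_preimage _ isOpen_compl_singleton
      have hx₀ : x₀ ∈ ⇑(Φ.symm g) ⁻¹' {(0 : ℂ)}ᶜ := by
        simp only [Set.mem_preimage, Set.mem_compl_iff, Set.mem_singleton_iff]
        rw [hs x₀ g, hg1]; exact one_ne_zero
      refine Filter.mem_map.mpr (Filter.mem_of_superset (hopen.mem_nhds hx₀) ?_)
      intro x hx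
      simp only [Set.mem_preimage, Set.mem_compl_iff, Set.mem_singleton_iff] at hx
      rw [hs x g] at hx
      by_contra hsxU
      exact hx (hg0 _ (fun hmem => hsxU (hUoU hmem)))
    exact ⟨⟨⟨s, t, hts, hst⟩, hScont, hTcont⟩⟩
  · rintro ⟨h⟩
    refine ⟨{ toFun := c0Comp h.symm
              invFun := c0Comp h
              left_inv := fun f => by ext x; simp
              right_inv := fun g => by ext y; simp
              map_add' := fun f g => by ext y; simp
              map_mul' := fun f g => by ext y; simp }, fun c f => by ext y; simp⟩
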